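/- Under Assumptions 1 and 2, the marginal distribution of compliance types of unit i is identified: P[AT_i] = E[D_i | Z_i=0, Z_j=0]; P[SC_i] = E[D_i | Z_i=0, Z_j=1] − E[D_i | Z_i=0, Z_j=0]; P[C_i] = E[D_i | Z_i=1, Z_j=0] − E[D_i | Z_i=0, Z_j=1]; P[GC_i] = E[D_i | Z_i=1, Z_j=1] − E[D_i | Z_i=1, Z_j=0]; and P[NT_i] = 1 − P[AT_i] − P[SC_i] − P[C_i] − P[GC_i]. -/

import Mathlib

open MeasureTheory ProbabilityTheory

noncomputable def bInd (b : Bool) : ℝ := if b then 1 else 0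

theorem stmt_0
    {Ω : Type*} [MeasurableSpace Ω] (P : Measure Ω) [IsProbabilityMeasure P]
    (Y : Bool → Bool → Ω → ℝ) (Di Dj : Bool → Bool → Ω → Bool)
    (Zi Zj : Ω → Bool)
    (hYmeas : ∀ d d', Measurable (Y d d'))
    (hYint : ∀ d d', Integrable (Y d d') P)
    (hDimeas : ∀ z z', Measurable (Di z z'))
    (hDjmeas : ∀ z z', Measurable (Dj z z'))
    (hZi : Measurable Zi) (hZj : Measurable Zj)
    (hpos : ∀ z z', 0 < P ({x | Zi x = z} ∩ {x | Zj x = z'}))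
    (hIV : IndepFun
      (fun ω => ((fun d d' => Y d d' ω),
                 (fun z z' => Di z z' ω),
                 (fun z z' => Dj z z' ω)))
      (fun ω => (Zi ω, Zj ω)) P)
    (hmono : ∀ᵐ ω ∂P,
      (Di false false ω ≤ Di false true ω ∧ Di false true ω ≤ Di true false ω ∧
        Di true false ω ≤ Di true true ω) ∧
      (Dj false false ω ≤ Dj false true ω ∧ Dj false true ω ≤ Dj true false ω ∧
        Dj true false ω ≤ Dj true true ω))
    :
    (P ({x | Di false false x = true})).toReal = (∫ ω, bInd (Di (Zi ω) (Zj ω) ω) ∂(P[|({x | Zi x = false} ∩ {x | Zj x = false})]))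
    ∧ (P ({x | Di false true x = true ∧ Di false false x = false})).toReal = (∫ ω, bInd (Di (Zi ω) (Zj ω) ω) ∂(P[|({x | Zi x = false} ∩ {x | Zj x = true})])) - (∫ ω, bInd (Di (Zi ω) (Zj ω) ω) ∂(P[|({x | Zi x = false} ∩ {x | Zj x = false})]))
    ∧ (P ({x | Di true false x = true ∧ Di false true x = false})).toReal = (∫ ω, bInd (Di (Zi ω) (Zj ω) ω) ∂(P[|({x | Zi x = true} ∩ {x | Zj x = false})])) - (∫ ω, bInd (Di (Zi ω) (Zj ω) ω) ∂(P[|({x | Zi x = false} ∩ {x | Zj x = true})]))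
    ∧ (P ({x | Di true true x = true ∧ Di true false x = false})).toReal = (∫ ω, bInd (Di (Zi ω) (Zj ω) ω) ∂(P[|({x | Zi x = true} ∩ {x | Zj x = true})])) - (∫ ω, bInd (Di (Zi ω) (Zj ω) ω) ∂(P[|({x | Zi x = true} ∩ {x | Zj x = false})]))
    ∧ (P ({x | Di true true x = false})).toReal = 1 - (P ({x | Di false false x = true})).toReal - (P ({x | Di false true x = true ∧ Di false false x = false})).toReal - (P ({x | Di true false x = true ∧ Di false true x = false})).toReal - (P ({x | Di true true x = true ∧ Di true false x = false})).toReal := by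
  -- key: conditional expectation identifies P[Di z z' = true]
  have key : ∀ z z' : Bool,
      (∫ ω, bInd (Di (Zi ω) (Zj ω) ω) ∂(P[|({x | Zi x = z} ∩ {x | Zj x = z'})]))
        = (P {x | Di z z' x = true}).toReal := by
    intro z z'
    set S : Set Ω := {x | Zi x = z} ∩ {x | Zj x = z'} with hS
    have hSm : MeasurableSet S :=
      (hZi (measurableSet_singleton z)).inter (hZj (measurableSet_singleton z'))
    have hS0 : P S ≠ 0 := (hpos z z').ne'
    have hStop : P S ≠ ⊤ := (measure_lt_top P S).ne
    -- independence of Di z z' and (Zi, Zj)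
    have hm : Measurable (fun p : (Bool → Bool → ℝ) × (Bool → Bool → Bool) × (Bool → Bool → Bool) => p.2.1 z z') :=
      (measurable_pi_apply z').comp ((measurable_pi_apply z).comp (measurable_fst.comp measurable_snd))
    have hind : IndepFun (fun ω => Di z z' ω) (fun ω => (Zi ω, Zj ω)) P :=
      hIV.comp hm measurable_id
    have hmul := hind.measure_inter_preimage_eq_mul ({true} : Set Bool)
      ({(z, z')} : Set (Bool × Bool)) (measurableSet_singleton _) (measurableSet_singleton _)
    have hsets1 : ((fun ω => Di z z' ω) ⁻¹' {true}) = {x | Di z z' x = true} := rfl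
    have hsets2 : ((fun ω => (Zi ω, Zj ω)) ⁻¹' {(z, z')}) = S := by
      ext x; simp [hS, Prod.ext_iff]
    rw [hsets1, hsets2] at hmul
    -- compute the conditional integral
    have hAmeas : MeasurableSet {x | Di z z' x = true} :=
      (hDimeas z z') (measurableSet_singleton true)
    have heq1 : (∫ ω in S, bInd (Di (Zi ω) (Zj ω) ω) ∂P)
        = ∫ ω in S, bInd (Di z z' ω) ∂P := by
      apply setIntegral_congr_fun hSm
      intro x hx
      have h1 : Zi x = z := hx.1
      have h2 : Zj x = z' := hx.2
      simp [h1, h2]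
    have heq2 : (∫ ω in S, bInd (Di z z' ω) ∂P)
        = (P (S ∩ {x | Di z z' x = true})).toReal := by
      have : (fun ω => bInd (Di z z' ω))
          = Set.indicator {x | Di z z' x = true} (fun _ => (1 : ℝ)) := by
        funext ω
        by_cases h : Di z z' ω = true <;> simp [bInd, h, Set.indicator]
      rw [this, setIntegral_indicator hAmeas, setIntegral_const, smul_eq_mul, mul_one]
      rfl
    rw [ProbabilityTheory.cond, integral_smul_measure, heq1, heq2, Set.inter_comm, hmul,
      smul_eq_mul, ENNReal.toReal_mul, ENNReal.toReal_inv]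
    have hne : (P S).toReal ≠ 0 := ENNReal.toReal_ne_zero.2 ⟨hS0, hStop⟩
    field_simp
  -- difference identities from monotonicity
  have diff : ∀ a b : Bool × Bool, (∀ᵐ ω ∂P, Di a.1 a.2 ω ≤ Di b.1 b.2 ω) →
      (P {x | Di b.1 b.2 x = true ∧ Di a.1 a.2 x = false}).toReal
        = (P {x | Di b.1 b.2 x = true}).toReal - (P {x | Di a.1 a.2 x = true}).toReal := by
    rintro ⟨a1, a2⟩ ⟨b1, b2⟩ hle
    have hAmeas : MeasurableSet {x | Di a1 a2 x = true} :=
      (hDimeas a1 a2) (measurableSet_singleton true)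
    have hBmeas : MeasurableSet {x | Di b1 b2 x = true} :=
      (hDimeas b1 b2) (measurableSet_singleton true)
    have h1 : P {x | Di b1 b2 x = true}
        = P {x | Di b1 b2 x = true ∧ Di a1 a2 x = true}
          + P {x | Di b1 b2 x = true ∧ Di a1 a2 x = false} := by
      rw [← measure_union]
      · congr 1
        ext x
        by_cases h : Di a1 a2 x = true <;> simp [h]
      · rw [Set.disjoint_left]
        rintro x ⟨-, h1⟩ ⟨-, h2⟩
        simp [h1] at h2
      · exact hBmeas.inter ((hDimeas a1 a2) (measurableSet_singleton false))
    have h2 : P {x | Di b1 b2 x = true ∧ Di a1 a2 x = true} = P {x | Di a1 a2 x = true} := by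
      apply measure_congr
      rw [Filter.eventuallyEq_set]
      filter_upwards [hle] with ω hω
      constructor
      · rintro ⟨-, h⟩; exact h
      · intro h
        refine ⟨?_, h⟩
        cases hb : Di b1 b2 ω
        · rw [h, hb] at hω; exact absurd hω (by simp)
        · rfl
    rw [h2] at h1
    have := congrArg ENNReal.toReal h1
    rw [ENNReal.toReal_add (measure_lt_top P _).ne (measure_lt_top P _).ne] at this
    linarith
  have mono1 : ∀ᵐ ω ∂P, Di false false ω ≤ Di false true ω := by
    filter_upwards [hmono] with ω hω; exact hω.1.1
  have mono2 : ∀ᵐ ω ∂P, Di false true ω ≤ Di true false ω := by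
    filter_upwards [hmono] with ω hω; exact hω.1.2.1
  have mono3 : ∀ᵐ ω ∂P, Di true false ω ≤ Di true true ω := by
    filter_upwards [hmono] with ω hω; exact hω.1.2.2
  have d1 := diff (false, false) (false, true) mono1
  have d2 := diff (false, true) (true, false) mono2
  have d3 := diff (true, false) (true, true) mono3
  -- complement for never-takers
  have hcompl : (P {x | Di true true x = false}).toReal
      = 1 - (P {x | Di true true x = true}).toReal := by
    have hset : {x | Di true true x = false} = {x | Di true true x = true}ᶜ := by
      ext x; by_cases h : Di true true x = true <;> simp [h]
    have hAm : MeasurableSet {x | Di true true x = true} :=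
      (hDimeas true true) (measurableSet_singleton true)
    rw [hset, measure_compl hAm (measure_lt_top P _).ne, measure_univ,
      ENNReal.toReal_sub_of_le prob_le_one (by simp)]
    simp
  refine ⟨(key false false).symm, ?_, ?_, ?_, ?_⟩
  · rw [key false true, key false false]; exact d1
  · rw [key true false, key false true]; exact d2
  · rw [key true true, key true false]; exact d3
  · rw [hcompl, d1, d2, d3]; ring
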